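/- Let r₁(τ), r₂(τ) be the two roots of τ − r³ − r² = 0 with Re r_j(τ) < 0 for Re τ > 0. Then for τ = is with s ∈ ℝ, |s| → ∞, the quantity (e^{r₂x} − e^{r₁x})/(r₂ − r₁) is O(⟨τ⟩^{−1/3}) uniformly in x ≥ 0, and (r₂e^{r₁x} − r₁e^{r₂x})/(r₂ − r₁) is O(1) uniformly in x ≥ 0. -/

import Mathlib

set_option maxHeartbeats 1600000 in
/-- Uniform bounds for the boundary kernels: for `τ = is` with `|s|` large, if `r₁, r₂`
are the two roots of `r³ + r² = τ` with negative real part, then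
`(e^{r₂x} − e^{r₁x})/(r₂ − r₁) = O(⟨τ⟩^{−1/3})` and
`(r₂e^{r₁x} − r₁e^{r₂x})/(r₂ − r₁) = O(1)`, uniformly in `x ≥ 0`. -/
theorem boundary_kernel_bounds :
    ∃ C > (0 : ℝ), ∃ S : ℝ, ∀ s : ℝ, S ≤ |s| → ∀ r₁ r₂ : ℂ,
      r₁ ^ 3 + r₁ ^ 2 = Complex.I * (s : ℂ) →
      r₂ ^ 3 + r₂ ^ 2 = Complex.I * (s : ℂ) →
      r₁.re < 0 → r₂.re < 0 → r₁ ≠ r₂ →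
      ∀ x : ℝ, 0 ≤ x →
        ‖((Complex.exp (r₂ * (x : ℂ)) - Complex.exp (r₁ * (x : ℂ))) / (r₂ - r₁))‖
            ≤ C * (1 + s ^ 2) ^ (-(1 / 6 : ℝ)) ∧
        ‖((r₂ * Complex.exp (r₁ * (x : ℂ)) - r₁ * Complex.exp (r₂ * (x : ℂ)))
            / (r₂ - r₁))‖ ≤ C := by
  refine ⟨12, by norm_num, 4096, ?_⟩
  intro s hs r₁ r₂ h₁ h₂ hre₁ hre₂ hne x hx
  set t := |s| with ht_def
  have ht : (4096:ℝ) ≤ t := hs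
  have ht0 : (0:ℝ) < t := by linarith
  set u := t ^ (((3:ℕ):ℝ)⁻¹) with hu_def
  have hu3 : u ^ (3:ℕ) = t := Real.rpow_inv_natCast_pow ht0.le (by norm_num)
  have hu : (16:ℝ) ≤ u := by
    have h16 : (16:ℝ) = (4096:ℝ) ^ (((3:ℕ):ℝ)⁻¹) := by
      rw [show (4096:ℝ) = 16 ^ (3:ℕ) by norm_num,
        Real.pow_rpow_inv_natCast (by norm_num) (by norm_num)]
    rw [h16]
    exact Real.rpow_le_rpow (by norm_num) ht (by norm_num)
  have hu0 : (0:ℝ) < u := by linarith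
  have habs : ‖Complex.I * s‖ = t := by
    simp [ht_def]
  -- every root has modulus ≤ 2u
  have hroot : ∀ r : ℂ, r ^ 3 + r ^ 2 = Complex.I * s → ‖r‖ ≤ 2 * u := by
    intro r hr
    set a := ‖r‖ with ha
    have ha0 : 0 ≤ a := norm_nonneg r
    have h1 : a ^ 3 ≤ t + a ^ 2 := by
      have hr3 : (r:ℂ)^3 = Complex.I * s - r^2 := by linear_combination hr
      calc a ^ 3 = ‖r ^ 3‖ := by rw [norm_pow]
        _ = ‖Complex.I * s - r ^ 2‖ := by rw [hr3]
        _ ≤ ‖Complex.I * s‖ + ‖r ^ 2‖ := norm_sub_le _ _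
        _ = t + a ^ 2 := by rw [habs, norm_pow]
    by_contra hcon
    push_neg at hcon
    nlinarith [hu3, hu, sq_nonneg a, sq_nonneg (a - 2*u), mul_pos (mul_pos hu0 hu0) hu0]
  have hr1 := hroot r₁ h₁
  have hr2 := hroot r₂ h₂
  have key : r₁^2 + r₁*r₂ + r₂^2 + r₁ + r₂ = 0 := by
    have hsub : (r₁ - r₂) * (r₁^2 + r₁*r₂ + r₂^2 + r₁ + r₂) = 0 := by
      linear_combination h₁ - h₂
    rcases mul_eq_zero.mp hsub with h | h
    · exact absurd (sub_eq_zero.mp h) hne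
    · exact h
  set p := r₁ + r₂ with hp_def
  have htau : Complex.I * s = -(p * (p+1)^2) := by
    rw [hp_def]
    linear_combination -h₁ + (2*r₁ + r₂ + 1) * key
  set ap := ‖p‖ with hap_def
  have hap0 : 0 ≤ ap := norm_nonneg p
  have hap_le : ap ≤ 4 * u := by
    calc ap ≤ ‖r₁‖ + ‖r₂‖ := norm_add_le _ _
      _ ≤ 4 * u := by linarith
  have hprod : ap * ‖p+1‖ ^ 2 = t := by
    have h := congrArg (‖·‖) htau
    rw [habs] at h
    rw [h, norm_neg, norm_mul, norm_pow]
  have hb0 : (0:ℝ) ≤ ‖p+1‖ := norm_nonneg _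
  have hap1_sq : u^2/4 ≤ ‖p+1‖^2 := by
    nlinarith [hprod, hap_le, hu3, hu, sq_nonneg (‖p+1‖)]
  have hap1 : u/2 ≤ ‖p+1‖ := by nlinarith
  have hap_ge : u/4 ≤ ap := by
    have h1 : ‖p+1‖ ≤ ap + 1 := by
      calc ‖p+1‖ ≤ ‖p‖ + ‖1‖ := norm_add_le _ _
        _ = ap + 1 := by simp [hap_def]
    linarith
  set d := ‖r₁ - r₂‖ with hd_def
  have hdiff : (r₁ - r₂)^2 = -(p * (3*p + 4)) := by
    rw [hp_def]; linear_combination 4 * key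
  have h3p4 : 3*ap - 4 ≤ ‖3*p+4‖ := by
    have h1 : ‖3*p‖ ≤ ‖3*p+4‖ + ‖(4:ℂ)‖ := by
      calc ‖3*p‖ = ‖(3*p+4) + (-4)‖ := by ring_nf
        _ ≤ ‖3*p+4‖ + ‖(-4:ℂ)‖ := norm_add_le _ _
        _ = ‖3*p+4‖ + ‖(4:ℂ)‖ := by rw [norm_neg]
    have h2 : ‖3*p‖ = 3 * ap := by
      rw [norm_mul]; norm_num [hap_def]
    have h3 : ‖(4:ℂ)‖ = 4 := by norm_num
    rw [h2, h3] at h1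
    linarith
  have hd_sq : d^2 = ap * ‖3*p + 4‖ := by
    calc d^2 = ‖(r₁ - r₂)^2‖ := (norm_pow _ _).symm
      _ = ‖p * (3*p+4)‖ := by rw [hdiff, norm_neg]
      _ = ap * ‖3*p+4‖ := norm_mul _ _
  have hd2 : u^2/8 ≤ d^2 := by
    have hstep : ap * (3*ap - 4) ≤ ap * ‖3*p+4‖ :=
      mul_le_mul_of_nonneg_left h3p4 hap0
    nlinarith [hu, hap_ge]
  have hd : u/3 ≤ d := by
    have hd0' : 0 ≤ d := norm_nonneg _
    nlinarith
  have hd0 : 0 < d := by linarith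
  have hden : ‖r₂ - r₁‖ = d := by
    rw [hd_def, ← norm_neg]; ring_nf
  -- exponentials are bounded by 1
  have hexp : ∀ r : ℂ, r.re < 0 → ‖Complex.exp (r * x)‖ ≤ 1 := by
    intro r hr
    rw [Complex.norm_exp]
    have hre : (r * (x:ℂ)).re = r.re * x := by
      simp [Complex.mul_re]
    rw [hre]
    calc Real.exp (r.re * x) ≤ Real.exp 0 :=
          Real.exp_le_exp.mpr (mul_nonpos_of_nonpos_of_nonneg hr.le hx)
      _ = 1 := Real.exp_zero
  have he1 := hexp r₁ hre₁
  have he2 := hexp r₂ hre₂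
  constructor
  · rw [norm_div, hden]
    have hnum : ‖Complex.exp (r₂ * x) - Complex.exp (r₁ * x)‖ ≤ 2 := by
      calc ‖Complex.exp (r₂ * x) - Complex.exp (r₁ * x)‖
          ≤ ‖Complex.exp (r₂ * x)‖ + ‖Complex.exp (r₁ * x)‖ :=
            norm_sub_le _ _
        _ ≤ 2 := by linarith
    have hstep : ‖Complex.exp (r₂ * x) - Complex.exp (r₁ * x)‖ / d ≤ 2 / (u/3) :=
      div_le_div₀ (by norm_num) hnum (by positivity) hd
    have heq : (2:ℝ) / (u/3) = 6 / u := by field_simp; ring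
    have hpow : (1 + s^2) ^ ((1:ℝ)/6) ≤ 2*u := by
      have hs2 : s^2 = t^2 := (sq_abs s).symm
      have h1 : (1:ℝ) + s^2 ≤ (2*u)^(6:ℕ) := by
        have h6 : (2*u)^(6:ℕ) = 64 * (u^(3:ℕ))^2 := by ring
        rw [h6, hu3, hs2]; nlinarith
      calc (1+s^2)^((1:ℝ)/6) ≤ ((2*u)^(6:ℕ))^((1:ℝ)/6) :=
            Real.rpow_le_rpow (by positivity) h1 (by norm_num)
        _ = 2*u := by
            rw [show (1:ℝ)/6 = ((6:ℕ):ℝ)⁻¹ by norm_num,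
              Real.pow_rpow_inv_natCast (by linarith) (by norm_num)]
    have hX0 : (0:ℝ) < (1 + s^2) ^ ((1:ℝ)/6) := Real.rpow_pos_of_pos (by positivity) _
    have hfinal : 6/u ≤ 12 * (1+s^2) ^ (-(1/6:ℝ)) := by
      rw [Real.rpow_neg (by positivity : (0:ℝ) ≤ 1+s^2),
        show (12:ℝ) * ((1+s^2) ^ ((1:ℝ)/6))⁻¹ = 12 / (1+s^2) ^ ((1:ℝ)/6) by ring,
        div_le_div_iff₀ hu0 hX0]
      nlinarith [hpow, hX0]
    calc ‖Complex.exp (r₂ * x) - Complex.exp (r₁ * x)‖ / d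
        ≤ 2 / (u/3) := hstep
      _ = 6 / u := heq
      _ ≤ 12 * (1+s^2) ^ (-(1/6:ℝ)) := hfinal
  · rw [norm_div, hden]
    have hnum : ‖r₂ * Complex.exp (r₁ * x) - r₁ * Complex.exp (r₂ * x)‖ ≤ 4*u := by
      calc ‖r₂ * Complex.exp (r₁ * x) - r₁ * Complex.exp (r₂ * x)‖
          ≤ ‖r₂ * Complex.exp (r₁ * x)‖ + ‖r₁ * Complex.exp (r₂ * x)‖ :=
            norm_sub_le _ _
        _ = ‖r₂‖ * ‖Complex.exp (r₁ * x)‖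
            + ‖r₁‖ * ‖Complex.exp (r₂ * x)‖ := by rw [norm_mul, norm_mul]
        _ ≤ 2*u * 1 + 2*u * 1 := by
            have g1 := mul_le_mul hr2 he1 (norm_nonneg _) (by linarith : (0:ℝ) ≤ 2*u)
            have g2 := mul_le_mul hr1 he2 (norm_nonneg _) (by linarith : (0:ℝ) ≤ 2*u)
            linarith
        _ = 4*u := by ring
    calc ‖r₂ * Complex.exp (r₁ * x) - r₁ * Complex.exp (r₂ * x)‖ / d
        ≤ (4*u) / (u/3) := div_le_div₀ (by positivity) hnum (by positivity) hd
      _ = 12 := by field_simp; ring
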